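/- For all integers m ≥ 1 and n ≥ 1, det D_{m,n} = ∏_{h=1}^{m} ∏_{k=1}^{n} (4·cos²(hπ/(2m+1)) + 4·cos²(kπ/(2n+1))). -/

import Mathlib

open Real

/-- The `n × n` matrix `A_n` with diagonal entries `4` except the last, which is `3`,
entries `-1` on the sub- and super-diagonal, and `0` elsewhere. -/
def matA (n : ℕ) : Matrix (Fin n) (Fin n) ℝ :=
  Matrix.of fun h k =>
    if h = k then (if (h : ℕ) = n - 1 then 3 else 4)
    else if |(h : ℤ) - (k : ℤ)| = 1 then -1 else 0

/-- `B_n = A_n - I_n`. -/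
def matB (n : ℕ) : Matrix (Fin n) (Fin n) ℝ := matA n - 1

/-- The `mn × mn` block-tridiagonal matrix `D_{m,n}`: diagonal blocks `A_n` except the
last one, which is `B_n`; blocks immediately above and below the diagonal are `-I_n`;
all other blocks are zero.  (For `m = 1` this is just `B_n`.) -/
def matD (m n : ℕ) : Matrix (Fin m × Fin n) (Fin m × Fin n) ℝ :=
  Matrix.of fun p q =>
    if p.1 = q.1 then
      (if (p.1 : ℕ) = m - 1 then matB n else matA n) p.2 q.2
    else if |(p.1 : ℤ) - (q.1 : ℤ)| = 1 then
      (-(1 : Matrix (Fin n) (Fin n) ℝ)) p.2 q.2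
    else 0



namespace Sand

noncomputable section
open Matrix Kronecker Finset

def matC (n : ℕ) : Matrix (Fin n) (Fin n) ℝ :=
  Matrix.of fun h k =>
    if h = k then (if (h : ℕ) = n - 1 then 1 else 2)
    else if |(h : ℤ) - (k : ℤ)| = 1 then -1 else 0

def theta (n k : ℕ) : ℝ := (2 * k + 1) * π / (2 * n + 1)

def matV (n : ℕ) : Matrix (Fin n) (Fin n) ℝ :=
  Matrix.of fun j k => Real.sin (((j : ℕ) + 1) * theta n (k : ℕ))

def matL (n : ℕ) : Matrix (Fin n) (Fin n) ℝ :=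
  Matrix.diagonal fun k : Fin n => 2 - 2 * Real.cos (theta n (k : ℕ))

lemma matC_apply {n : ℕ} (j a : Fin n) :
    matC n j a =
      (if a = j then (if (j : ℕ) = n - 1 then 1 else 2) else 0) +
        ((if (a : ℕ) = (j : ℕ) + 1 then -1 else 0) +
          (if (a : ℕ) + 1 = (j : ℕ) then -1 else 0)) := by
  have key : (|(j : ℤ) - (a : ℤ)| = 1) ↔ ((a : ℕ) = (j : ℕ) + 1 ∨ (a : ℕ) + 1 = (j : ℕ)) := by
    rw [abs_eq (by norm_num : (0:ℤ) ≤ 1)]; omega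
  have hfe : (j = a) ↔ ((j:ℕ) = (a:ℕ)) := Fin.ext_iff
  have hfe' : (a = j) ↔ ((a:ℕ) = (j:ℕ)) := Fin.ext_iff
  rcases j with ⟨j, hj⟩; rcases a with ⟨a, ha⟩
  simp only [matC, Matrix.of_apply, key, hfe, hfe', Fin.val_mk] at *
  split_ifs <;> first | (exfalso; omega) | norm_num

lemma sum_ite_coe_eq {n : ℕ} (t : ℕ) (v : Fin n → ℝ) :
    (∑ a : Fin n, if (a : ℕ) = t then v a else 0) =
      if h : t < n then v ⟨t, h⟩ else 0 := by
  split_ifs with h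
  · rw [Finset.sum_eq_single (⟨t, h⟩ : Fin n)]
    · simp
    · intro b _ hb
      have hc : ¬((b : ℕ) = t) := by
        intro hc
        exact hb (Fin.ext (by simpa using hc))
      simp [hc]
    · intro h'
      exact absurd (Finset.mem_univ _) h'
  · apply Finset.sum_eq_zero
    intro b _
    have hc : ¬((b : ℕ) = t) := by
      have hb := b.isLt
      generalize (b : ℕ) = x at *
      omega
    simp [hc]

lemma sum_ite_coe_succ_eq {n : ℕ} (t : ℕ) (v : Fin n → ℝ) :
    (∑ a : Fin n, if (a : ℕ) + 1 = t then v a else 0) =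
      if h : t - 1 < n ∧ 1 ≤ t then v ⟨t - 1, h.1⟩ else 0 := by
  split_ifs with h
  · rw [Finset.sum_eq_single (⟨t - 1, h.1⟩ : Fin n)]
    · simp [Nat.sub_add_cancel h.2]
    · intro b _ hb
      have hc : ¬((b : ℕ) + 1 = t) := by
        intro hc
        exact hb (Fin.ext (by simp; omega))
      simp [hc]
    · intro h'
      exact absurd (Finset.mem_univ _) h'
  · apply Finset.sum_eq_zero
    intro b _
    have hc : ¬((b : ℕ) + 1 = t) := by
      have hb := b.isLt
      generalize (b : ℕ) = x at *
      omega
    simp [hc]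

lemma sin_add_sin_sub (x y : ℝ) :
    Real.sin (x - y) + Real.sin (x + y) = 2 * Real.sin x * Real.cos y := by
  rw [Real.sin_add, Real.sin_sub]; ring

lemma sin_succ_eq (n k : ℕ) :
    Real.sin (((n : ℝ) + 1) * theta n k) = Real.sin ((n : ℝ) * theta n k) := by
  have h : ((n : ℝ) + 1) * theta n k = ((2 * k + 1 : ℕ) : ℝ) * π - (n : ℝ) * theta n k := by
    unfold theta
    have hne : (2 * (n : ℝ) + 1) ≠ 0 := by positivity
    push_cast
    field_simp
    ring
  rw [h, Real.sin_nat_mul_pi_sub]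
  have h2 : ((-1 : ℝ)) ^ (2 * k + 1) = -1 := by
    rw [pow_succ, pow_mul]; norm_num
  rw [h2]; ring

lemma matC_mul_matV (n : ℕ) : matC n * matV n = matV n * matL n := by
  ext j k
  simp only [matL]
  rw [Matrix.mul_apply, Matrix.mul_diagonal]
  have hsplit : ∀ a : Fin n, matC n j a * matV n a k =
      (if a = j then (if (j : ℕ) = n - 1 then 1 else 2) * matV n a k else 0)
        + ((if (a : ℕ) = (j : ℕ) + 1 then -matV n a k else 0)
          + (if (a : ℕ) + 1 = (j : ℕ) then -matV n a k else 0)) := by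
    intro a; rw [matC_apply]; split_ifs <;> ring
  rw [Finset.sum_congr rfl (fun a _ => hsplit a), Finset.sum_add_distrib,
    Finset.sum_add_distrib, Finset.sum_ite_eq' Finset.univ j,
    sum_ite_coe_eq ((j : ℕ) + 1) (fun a => -matV n a k),
    sum_ite_coe_succ_eq (j : ℕ) (fun a => -matV n a k)]
  simp only [Finset.mem_univ, if_true, matV, Matrix.of_apply]
  set θ := theta n (k : ℕ) with hθdef
  set J := (j : ℕ) with hJ
  have hJn : J < n := j.isLt
  have h3 : (if h : J - 1 < n ∧ 1 ≤ J then -Real.sin ((((J - 1 : ℕ) : ℝ) + 1) * θ) else 0)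
      = -Real.sin ((J : ℝ) * θ) := by
    rcases Nat.eq_zero_or_pos J with h0 | h1
    · rw [dif_neg (by omega), h0]
      norm_num
    · rw [dif_pos ⟨by omega, h1⟩]
      congr 2
      rw [Nat.cast_sub h1]
      push_cast
      ring
  rw [h3]
  by_cases hlast : J = n - 1
  · rw [if_pos hlast, dif_neg (by omega)]
    have hcast : ((n : ℝ)) = (J : ℝ) + 1 := by
      have : n = J + 1 := by omega
      rw [this]; push_cast; ring
    have hper : Real.sin (((J : ℝ) + 1) * θ + θ) = Real.sin (((J : ℝ) + 1) * θ) := by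
      have hs := sin_succ_eq n (k : ℕ)
      rw [hcast] at hs
      have e : ((J : ℝ) + 1) * θ + θ = ((J : ℝ) + 1 + 1) * θ := by ring
      rw [e]
      exact hs
    have hkey := sin_add_sin_sub (((J : ℝ) + 1) * θ) θ
    have e1 : ((J : ℝ)) * θ = ((J : ℝ) + 1) * θ - θ := by ring
    push_cast
    rw [e1]
    linear_combination hper - hkey
  · rw [if_neg hlast, dif_pos (by omega)]
    have hkey := sin_add_sin_sub (((J : ℝ) + 1) * θ) θ
    have e1 : ((J : ℝ)) * θ = ((J : ℝ) + 1) * θ - θ := by ring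
    have e2 : ((J : ℝ) + 1 + 1) * θ = ((J : ℝ) + 1) * θ + θ := by ring
    push_cast
    rw [e1, e2]
    linear_combination -hkey


lemma cos_sum (n : ℕ) (α : ℝ) (h1 : Real.sin (α / 2) ≠ 0)
    (h2 : Real.sin ((2 * (n : ℝ) + 1) * α / 2) = 0) :
    ∑ j ∈ Finset.range n, Real.cos (((j : ℝ) + 1) * α) = -(1 / 2) := by
  set f : ℕ → ℝ := fun j => Real.sin ((2 * (j : ℝ) + 1) * α / 2) with hf
  have tel := Finset.sum_range_sub f n
  have step : ∀ j : ℕ, f (j + 1) - f j = 2 * Real.sin (α / 2) * Real.cos (((j : ℝ) + 1) * α) := by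
    intro j
    simp only [hf]
    push_cast
    have e1 : (2 * ((j : ℝ) + 1) + 1) * α / 2 = ((j : ℝ) + 1) * α + α / 2 := by ring
    have e2 : (2 * (j : ℝ) + 1) * α / 2 = ((j : ℝ) + 1) * α - α / 2 := by ring
    rw [e1, e2, Real.sin_add, Real.sin_sub]
    ring
  rw [Finset.sum_congr rfl (fun j _ => step j)] at tel
  rw [← Finset.mul_sum] at tel
  have hfn : f n = 0 := h2
  have hf0 : f 0 = Real.sin (α / 2) := by simp [hf]
  have h2s : (2 * Real.sin (α / 2)) ≠ 0 := mul_ne_zero two_ne_zero h1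
  apply mul_left_cancel₀ h2s
  rw [tel, hfn, hf0]
  ring

lemma sin_ne (n : ℕ) (z : ℤ) (hz : z ≠ 0) (hz2 : z.natAbs < 2 * n + 1) :
    Real.sin ((z : ℝ) * π / (2 * (n : ℝ) + 1)) ≠ 0 := by
  intro h
  rw [Real.sin_eq_zero_iff] at h
  obtain ⟨q, hq⟩ := h
  have hpi := Real.pi_ne_zero
  have hden : (2 * (n : ℝ) + 1) ≠ 0 := by positivity
  have hq2 : (q : ℝ) * (2 * (n : ℝ) + 1) * π = (z : ℝ) * π := by
    field_simp at hq
    linear_combination π * hq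
  have hq3 : (q : ℝ) * (2 * (n : ℝ) + 1) = (z : ℝ) := mul_right_cancel₀ hpi hq2
  have hq4 : q * (2 * (n : ℤ) + 1) = z := by exact_mod_cast hq3
  have habs : z.natAbs = q.natAbs * (2 * n + 1) := by
    rw [← hq4, Int.natAbs_mul]
    congr 1 <;> omega
  have hq0 : q ≠ 0 := by
    rintro rfl
    simp at hq4
    omega
  have h1q : 1 ≤ q.natAbs := Int.natAbs_pos.mpr hq0
  have hge : 2 * n + 1 ≤ z.natAbs := by
    rw [habs]
    exact Nat.le_mul_of_pos_left _ (by omega)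
  omega

lemma sin_orth (n : ℕ) (k l : Fin n) :
    (∑ j : Fin n, Real.sin (((j : ℕ) + 1) * theta n (k : ℕ)) *
        Real.sin (((j : ℕ) + 1) * theta n (l : ℕ))) =
      if k = l then (2 * (n : ℝ) + 1) / 4 else 0 := by
  set a := theta n (k : ℕ) with ha
  set b := theta n (l : ℕ) with hb
  have hden : (2 * (n : ℝ) + 1) ≠ 0 := by positivity
  have hprod : ∀ j : ℕ, Real.sin (((j : ℝ) + 1) * a) * Real.sin (((j : ℝ) + 1) * b) =
      (Real.cos (((j : ℝ) + 1) * (a - b)) - Real.cos (((j : ℝ) + 1) * (a + b))) / 2 := by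
    intro j
    have e1 : ((j : ℝ) + 1) * (a - b) = ((j : ℝ) + 1) * a - ((j : ℝ) + 1) * b := by ring
    have e2 : ((j : ℝ) + 1) * (a + b) = ((j : ℝ) + 1) * a + ((j : ℝ) + 1) * b := by ring
    rw [e1, e2, Real.cos_sub, Real.cos_add]
    ring
  have hsum2 : ∑ j ∈ Finset.range n, Real.cos (((j : ℝ) + 1) * (a + b)) = -(1 / 2) := by
    apply cos_sum
    · have e : (a + b) / 2 = (((k : ℤ) + (l : ℤ) + 1 : ℤ) : ℝ) * π / (2 * (n : ℝ) + 1) := by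
        rw [ha, hb]; unfold theta; push_cast; field_simp; ring
      rw [e]
      apply sin_ne
      · omega
      · have := k.isLt; have := l.isLt; omega
    · have e : (2 * (n : ℝ) + 1) * (a + b) / 2 = (((k : ℤ) + (l : ℤ) + 1 : ℤ) : ℝ) * π := by
        rw [ha, hb]; unfold theta; push_cast; field_simp; ring
      rw [e]
      exact Real.sin_int_mul_pi _
  rw [Fin.sum_univ_eq_sum_range
    (fun j => Real.sin (((j : ℝ) + 1) * a) * Real.sin (((j : ℝ) + 1) * b)) n]
  rw [Finset.sum_congr rfl (fun j _ => hprod j), ← Finset.sum_div,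
    Finset.sum_sub_distrib, hsum2]
  by_cases hkl : k = l
  · have hab : a = b := by rw [ha, hb, hkl]
    rw [if_pos hkl]
    have h1 : ∀ j ∈ Finset.range n, Real.cos (((j : ℝ) + 1) * (a - b)) = 1 := by
      intro j _
      rw [hab, sub_self, mul_zero, Real.cos_zero]
    rw [Finset.sum_congr rfl h1, Finset.sum_const, Finset.card_range]
    push_cast
    ring
  · rw [if_neg hkl]
    have h1 : ∑ j ∈ Finset.range n, Real.cos (((j : ℝ) + 1) * (a - b)) = -(1 / 2) := by
      apply cos_sum
      · have e : (a - b) / 2 = (((k : ℤ) - (l : ℤ) : ℤ) : ℝ) * π / (2 * (n : ℝ) + 1) := by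
          rw [ha, hb]; unfold theta; push_cast; field_simp; ring
        rw [e]
        apply sin_ne
        · have : (k : ℕ) ≠ (l : ℕ) := fun hc => hkl (Fin.ext hc)
          omega
        · have := k.isLt; have := l.isLt; omega
      · have e : (2 * (n : ℝ) + 1) * (a - b) / 2 = (((k : ℤ) - (l : ℤ) : ℤ) : ℝ) * π := by
          rw [ha, hb]; unfold theta; push_cast; field_simp; ring
        rw [e]
        exact Real.sin_int_mul_pi _
    rw [h1]
    ring
lemma matV_orth (n : ℕ) :
    (matV n)ᵀ * matV n = ((2 * (n : ℝ) + 1) / 4) • (1 : Matrix (Fin n) (Fin n) ℝ) := by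
  ext k l
  rw [Matrix.mul_apply]
  simp only [Matrix.transpose_apply, matV, Matrix.of_apply, Matrix.smul_apply,
    Matrix.one_apply, smul_eq_mul]
  rw [sin_orth n k l]
  split_ifs <;> ring

lemma det_matV_ne_zero (n : ℕ) : (matV n).det ≠ 0 := by
  have h := congrArg Matrix.det (matV_orth n)
  rw [Matrix.det_mul, Matrix.det_transpose, Matrix.det_smul, Matrix.det_one,
    mul_one, Fintype.card_fin] at h
  intro h0
  rw [h0, mul_zero] at h
  have hpos : (0 : ℝ) < ((2 * (n : ℝ) + 1) / 4) ^ n := by positivity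
  rw [← h] at hpos
  exact lt_irrefl 0 hpos

open Kronecker in
lemma matD_eq (m n : ℕ) :
    matD m n = matC m ⊗ₖ (1 : Matrix (Fin n) (Fin n) ℝ)
      + (1 : Matrix (Fin m) (Fin m) ℝ) ⊗ₖ matC n := by
  ext ⟨h, a⟩ ⟨k, b⟩
  simp only [matD, Matrix.of_apply, Matrix.add_apply, Matrix.kroneckerMap_apply]
  by_cases h1 : h = k
  · subst h1
    rw [if_pos rfl]
    rw [Matrix.one_apply_eq, one_mul]
    have hCm : matC m h h = if (h : ℕ) = m - 1 then 1 else 2 := by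
      simp [matC]
    rw [hCm]
    by_cases hl : (h : ℕ) = m - 1
    · rw [if_pos hl, if_pos hl]
      simp only [matB, matA, matC, Matrix.sub_apply, Matrix.of_apply, Matrix.one_apply]
      split_ifs <;> norm_num
    · rw [if_neg hl, if_neg hl]
      simp only [matA, matC, Matrix.of_apply, Matrix.one_apply]
      split_ifs <;> norm_num
  · rw [if_neg h1]
    rw [Matrix.one_apply_ne h1, zero_mul, add_zero]
    have hCm : matC m h k = if |(h : ℤ) - (k : ℤ)| = 1 then -1 else 0 := by
      simp [matC, h1]
    rw [hCm]
    by_cases h3 : |(h : ℤ) - (k : ℤ)| = 1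
    · rw [if_pos h3, if_pos h3, Matrix.neg_apply]
      simp only [Matrix.one_apply]
      split_ifs <;> norm_num
    · rw [if_neg h3, if_neg h3, zero_mul]

lemma lam_eq (m h : ℕ) (hh : h < m) :
    2 - 2 * Real.cos (theta m h)
      = 4 * Real.cos (((m - h : ℕ) : ℝ) * π / (2 * (m : ℝ) + 1)) ^ 2 := by
  have hcos : Real.cos (theta m h)
      = -Real.cos (2 * (((m - h : ℕ) : ℝ) * π / (2 * (m : ℝ) + 1))) := by
    rw [← Real.cos_pi_sub]
    congr 1
    rw [Nat.cast_sub hh.le]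
    unfold theta
    have hne : (2 * (m : ℝ) + 1) ≠ 0 := by positivity
    field_simp
    ring
  rw [hcos]
  have hsq := Real.cos_sq (((m - h : ℕ) : ℝ) * π / (2 * (m : ℝ) + 1))
  linear_combination (-4) * hsq

lemma prod_reindex (m : ℕ) (f : ℕ → ℝ) :
    (∏ h : Fin m, f (m - (h : ℕ))) = ∏ h ∈ Finset.Icc 1 m, f h := by
  apply Finset.prod_bij' (i := fun (h : Fin m) (_ : h ∈ Finset.univ) => m - (h : ℕ))
    (j := fun (b : ℕ) (hb : b ∈ Finset.Icc 1 m) =>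
      (⟨m - b, by simp only [Finset.mem_Icc] at hb; omega⟩ : Fin m))
  case hi =>
    intro a ha
    have := a.isLt
    simp only [Finset.mem_Icc]
    omega
  case hj =>
    intro b hb
    exact Finset.mem_univ _
  case left_inv =>
    intro a ha
    have := a.isLt
    apply Fin.ext
    simp only [Fin.val_mk]
    omega
  case right_inv =>
    intro b hb
    simp only [Finset.mem_Icc] at hb
    simp only [Fin.val_mk]
    omega
  case h =>
    intro a ha
    rfl

open Kronecker in
lemma det_matD (m n : ℕ) :
    (matD m n).det = ∏ p : Fin m × Fin n,
      ((2 - 2 * Real.cos (theta m (p.1 : ℕ))) + (2 - 2 * Real.cos (theta n (p.2 : ℕ)))) := by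
  have hmul : matD m n * (matV m ⊗ₖ matV n) =
      (matV m ⊗ₖ matV n) * (matL m ⊗ₖ (1 : Matrix (Fin n) (Fin n) ℝ)
        + (1 : Matrix (Fin m) (Fin m) ℝ) ⊗ₖ matL n) := by
    rw [matD_eq, add_mul, mul_add]
    congr 1
    · rw [← Matrix.mul_kronecker_mul, ← Matrix.mul_kronecker_mul, matC_mul_matV,
        Matrix.one_mul, Matrix.mul_one]
    · rw [← Matrix.mul_kronecker_mul, ← Matrix.mul_kronecker_mul, matC_mul_matV,
        Matrix.one_mul, Matrix.mul_one]
  have hdiag : matL m ⊗ₖ (1 : Matrix (Fin n) (Fin n) ℝ)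
      + (1 : Matrix (Fin m) (Fin m) ℝ) ⊗ₖ matL n
      = Matrix.diagonal (fun p : Fin m × Fin n =>
          (2 - 2 * Real.cos (theta m (p.1 : ℕ))) + (2 - 2 * Real.cos (theta n (p.2 : ℕ)))) := by
    simp only [matL]
    rw [← Matrix.diagonal_one, ← Matrix.diagonal_one,
      Matrix.diagonal_kronecker_diagonal, Matrix.diagonal_kronecker_diagonal,
      Matrix.diagonal_add]
    congr 1
    funext p
    simp only [Pi.add_apply, mul_one, one_mul]
  have hV : (matV m ⊗ₖ matV n).det ≠ 0 := by
    rw [Matrix.det_kronecker]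
    exact mul_ne_zero (pow_ne_zero _ (det_matV_ne_zero m)) (pow_ne_zero _ (det_matV_ne_zero n))
  have hd := congrArg Matrix.det hmul
  rw [Matrix.det_mul, Matrix.det_mul, hdiag, Matrix.det_diagonal] at hd
  exact mul_right_cancel₀ hV (hd.trans (mul_comm _ _))

end
end Sand

theorem det_matD_eq_double_product (m n : ℕ) (hm : 1 ≤ m) (hn : 1 ≤ n) :
    (matD m n).det =
      ∏ h ∈ Finset.Icc 1 m, ∏ k ∈ Finset.Icc 1 n,
        (4 * Real.cos (h * π / (2 * m + 1)) ^ 2 +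
         4 * Real.cos (k * π / (2 * n + 1)) ^ 2) := by
  rw [Sand.det_matD m n, Fintype.prod_prod_type]
  have step1 : ∀ h : Fin m,
      (∏ k : Fin n, ((2 - 2 * Real.cos (Sand.theta m (h : ℕ)))
          + (2 - 2 * Real.cos (Sand.theta n (k : ℕ)))))
        = ∏ k ∈ Finset.Icc 1 n,
            (4 * Real.cos (((m - (h : ℕ) : ℕ) : ℝ) * π / (2 * (m : ℝ) + 1)) ^ 2
              + 4 * Real.cos ((k : ℝ) * π / (2 * (n : ℝ) + 1)) ^ 2) := by
    intro h
    rw [← Sand.prod_reindex n (fun k =>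
      4 * Real.cos (((m - (h : ℕ) : ℕ) : ℝ) * π / (2 * (m : ℝ) + 1)) ^ 2
        + 4 * Real.cos ((k : ℝ) * π / (2 * (n : ℝ) + 1)) ^ 2)]
    apply Finset.prod_congr rfl
    intro k _
    rw [Sand.lam_eq m (h : ℕ) h.isLt, Sand.lam_eq n (k : ℕ) k.isLt]
  rw [Finset.prod_congr rfl (fun h _ => step1 h)]
  exact Sand.prod_reindex m (fun h =>
    ∏ k ∈ Finset.Icc 1 n,
      (4 * Real.cos ((h : ℝ) * π / (2 * (m : ℝ) + 1)) ^ 2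
        + 4 * Real.cos ((k : ℝ) * π / (2 * (n : ℝ) + 1)) ^ 2))
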